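/- Let P ⊆ S^{N−1} be a finite root system in ℝ^N (N ≥ 1) satisfying condition (EA), let ρ ≥ 0 and 0 < r, R. Then there exists a constant C > 0, depending only on N, P, ρ, r and R, such that for every open set Ω ⊆ ℝ^N satisfying the reflection property (RP) with respect to P and ρ, containing the open ball 𝔅_r of radius σ1(P)⁻¹σ2(P)(ρ + 2r) about the origin, and contained in B(0, R), the (N−1)-dimensional Hausdorff measure of the topological boundary of Ω satisfies H^{N−1}(∂Ω) ≤ C. -/

import Mathlib

open scoped RealInnerProductSpace ENNReal NNReal
open Metric Set MeasureTheory

noncomputable section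

abbrev E (N : ℕ) := EuclideanSpace ℝ (Fin N)

variable {N : ℕ}

/-- Reflection across the hyperplane `Π_p(s) = {x | x·p = s}`. -/
def reflect (p : E N) (s : ℝ) (x : E N) : E N := x - (2 * (⟪x, p⟫ - s)) • p

/-- Reflection across the hyperplane through the origin orthogonal to `p`. -/
def reflect0 (p : E N) : E N → E N := reflect p 0

/-- A finite root system of unit vectors. -/
def IsRootSystem (P : Set (E N)) : Prop :=
  P.Finite ∧ (∀ p ∈ P, ‖p‖ = 1) ∧
  (∀ p ∈ P, {q | q ∈ P ∧ ∃ c : ℝ, q = c • p} = {p, -p}) ∧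
  (∀ p ∈ P, reflect0 p '' P = P)

/-- Condition (EA): for every hyperplane through the origin (with normal `v ≠ 0`),
the part of `P` outside the hyperplane spans `ℝ^N`. -/
def CondEA (P : Set (E N)) : Prop :=
  ∀ v : E N, v ≠ 0 → Submodule.span ℝ {p | p ∈ P ∧ ⟪p, v⟫ ≠ 0} = ⊤

/-- The reflection property (RP) with respect to `P` and `ρ`. -/
def ReflProp (P : Set (E N)) (ρ : ℝ) (Ω : Set (E N)) : Prop :=
  ∀ p ∈ P, ∀ s > ρ,
    reflect p s '' Ω ∩ {x | ⟪x, p⟫ < s} ⊆ Ω ∩ {x | ⟪x, p⟫ < s}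

/-- `v` enumerates a basis of `ℝ^N` consisting of elements of `P`. -/
def BasisIn (P : Set (E N)) (v : Fin N → E N) : Prop :=
  (∀ i, v i ∈ P) ∧ LinearIndependent ℝ v ∧ Submodule.span ℝ (Set.range v) = ⊤

/-- The open cone `Co_r(A)` generated by a basis. -/
def Cone (r : ℝ) (v : Fin N → E N) : Set (E N) :=
  {x | ∃ a : Fin N → ℝ, (∀ i, 0 < a i) ∧ (∑ i, a i) < r ∧ x = ∑ i, a i • v i}

/-- `σ₁(P)`. -/
def sigma1 (P : Set (E N)) : ℝ :=
  sInf {s | ∃ p₁ ∈ P, s = sSup {t | ∃ v : Fin N → E N, BasisIn P v ∧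
    t = sInf (Set.range fun i => |⟪v i, p₁⟫|)}}

/-- `σ₂(P)`. -/
def sigma2 (P : Set (E N)) : ℝ :=
  sSup {t | ∃ x : E N, (∀ p ∈ P, |⟪p, x⟫| ≤ 1) ∧ t = ‖x‖}

/-- `σ₃(P)`. -/
def sigma3 (P : Set (E N)) : ℝ :=
  sInf {s | ∃ v : Fin N → E N, BasisIn P v ∧
    s = sSup {r | 0 < r ∧ ball ((1 / (2 * (N : ℝ))) • ∑ i, v i) r ⊆ Cone 1 v}}

/-! ### Auxiliary lemmas -/

section Aux

lemma nontrivE (hN : 1 ≤ N) : Nontrivial (E N) := by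
  have h : 0 < Module.finrank ℝ (E N) := by
    rw [finrank_euclideanSpace_fin]; omega
  exact Module.nontrivial_of_finrank_pos h

/-- Extract a basis (indexed by `Fin N`) from a spanning set. -/
lemma basis_of_span {S : Set (E N)} (hsp : Submodule.span ℝ S = ⊤) :
    ∃ v : Fin N → E N, (∀ i, v i ∈ S) ∧ LinearIndependent ℝ v ∧
      Submodule.span ℝ (Set.range v) = ⊤ := by
  classical
  obtain ⟨t, hts, htsp, hli⟩ := exists_linearIndependent ℝ S
  rw [hsp] at htsp
  have htfin : t.Finite := hli.setFinite
  haveI := htfin.fintype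
  have hb : Module.Basis ↥t ℝ (E N) := Module.Basis.mk hli (by rw [Subtype.range_coe, htsp])
  have hcard : Fintype.card ↥t = N := by
    have h1 := Module.finrank_eq_card_basis hb
    rw [finrank_euclideanSpace_fin] at h1
    omega
  set e : Fin N ≃ ↥t := (Fintype.equivFinOfCardEq hcard).symm with he
  refine ⟨fun i => ((e i : ↥t) : E N), fun i => hts (e i).2, ?_, ?_⟩
  · exact hli.comp e (Equiv.injective e)
  · have hrange : Set.range (fun i => ((e i : ↥t) : E N)) = t := by
      have h1 : Set.range (fun i => ((e i : ↥t) : E N)) =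
          Subtype.val '' Set.range (⇑e) := by
        rw [← Set.range_comp]; rfl
      rw [h1, Equiv.range_eq_univ, Set.image_univ, Subtype.range_coe]
    rw [hrange, htsp]

/-- Staircase lemma: from a point outside `Ω`, moving along positive combinations of
roots whose inner products with the start point exceed `ρ` stays outside `Ω`. -/
lemma stair_up {P : Set (E N)} {ρ : ℝ} {Ω : Set (E N)} (hRP : ReflProp P ρ Ω)
    {v : Fin N → E N} (hvP : ∀ i, v i ∈ P) (hvU : ∀ i, ‖v i‖ = 1)
    {y : E N} (hy : y ∉ Ω) {a : Fin N → ℝ} (ha : ∀ i, 0 ≤ a i)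
    (hmargin : ∀ i, ρ + ∑ j, a j < ⟪y, v i⟫) :
    y + ∑ j, a j • v j ∉ Ω := by
  classical
  have key : ∀ s : Finset (Fin N), y + ∑ j ∈ s, a j • v j ∉ Ω := by
    intro s
    induction s using Finset.induction_on with
    | empty => simpa using hy
    | @insert j s hj ih =>
      rw [Finset.sum_insert hj]
      have hrw : y + (a j • v j + ∑ k ∈ s, a k • v k)
          = (y + ∑ k ∈ s, a k • v k) + a j • v j := by abel
      rw [hrw]
      set z := y + ∑ k ∈ s, a k • v k with hz
      rcases eq_or_lt_of_le (ha j) with h0 | hpos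
      · simpa [← h0] using ih
      intro hw
      -- inner products
      have hvv : ⟪v j, v j⟫ = 1 := by
        rw [real_inner_self_eq_norm_mul_norm, hvU j]; norm_num
      have hinner_z : ⟪z, v j⟫ = ⟪y, v j⟫ + ∑ k ∈ s, a k * ⟪v k, v j⟫ := by
        rw [hz, inner_add_left, sum_inner]
        congr 1
        exact Finset.sum_congr rfl fun k _ => real_inner_smul_left _ _ _
      have hbound : ∀ k, -1 ≤ ⟪v k, v j⟫ := by
        intro k
        have h1 := abs_real_inner_le_norm (v k) (v j)
        rw [hvU k, hvU j] at h1
        have h2 := abs_le.mp (by linarith : |⟪v k, v j⟫| ≤ 1)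
        linarith [h2.1]
      have hsum_ge : -∑ k ∈ s, a k ≤ ∑ k ∈ s, a k * ⟪v k, v j⟫ := by
        rw [← Finset.sum_neg_distrib]
        apply Finset.sum_le_sum
        intro k _
        have := hbound k
        nlinarith [ha k]
      have hsub : ∑ k ∈ s, a k + a j ≤ ∑ k, a k := by
        have h1 : ∑ k ∈ insert j s, a k ≤ ∑ k, a k :=
          Finset.sum_le_sum_of_subset_of_nonneg (Finset.subset_univ _)
            fun i _ _ => ha i
        rw [Finset.sum_insert hj] at h1
        linarith
      have hzj : ρ + a j < ⟪z, v j⟫ := by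
        have h1 := hmargin j
        rw [hinner_z]
        have := hsum_ge
        linarith
      set s₀ := ⟪z, v j⟫ + a j / 2 with hs₀def
      have hs₀ : s₀ > ρ := by rw [hs₀def]; linarith
      have hinner_w : ⟪z + a j • v j, v j⟫ = ⟪z, v j⟫ + a j := by
        rw [inner_add_left, real_inner_smul_left, hvv, mul_one]
      have hrefl : reflect (v j) s₀ (z + a j • v j) = z := by
        rw [reflect, hinner_w]
        have hcoef : 2 * (⟪z, v j⟫ + a j - s₀) = a j := by rw [hs₀def]; ring
        rw [hcoef]
        abel
      have hmem := hRP (v j) (hvP j) s₀ hs₀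
        ⟨⟨z + a j • v j, hw, hrefl⟩, by
          show ⟪z, v j⟫ < s₀
          rw [hs₀def]; linarith⟩
      exact ih hmem.1
  have := key Finset.univ
  simpa using this

lemma rootSystem_neg {P : Set (E N)} (hP : IsRootSystem P) : ∀ p ∈ P, -p ∈ P := by
  intro p hp
  have hpair := hP.2.2.1 p hp
  have : -p ∈ {q | q ∈ P ∧ ∃ c : ℝ, q = c • p} := by
    rw [hpair]; right; rfl
  exact this.1

lemma span_P (hN : 1 ≤ N) {P : Set (E N)} (hEA : CondEA P) :
    Submodule.span ℝ P = ⊤ := by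
  haveI := nontrivE hN
  obtain ⟨v₀, hv₀⟩ := exists_ne (0 : E N)
  have h := hEA v₀ hv₀
  rw [eq_top_iff, ← h]
  exact Submodule.span_mono fun p hp => hp.1

lemma basisSet_finite {P : Set (E N)} (hP : IsRootSystem P) :
    {v : Fin N → E N | BasisIn P v}.Finite := by
  have h1 : {v : Fin N → E N | BasisIn P v} ⊆ Set.pi Set.univ (fun _ => P) :=
    fun v hv i _ => hv.1 i
  exact (Set.Finite.pi fun _ => hP.1).subset h1

lemma P_nonempty (hN : 1 ≤ N) {P : Set (E N)} (hEA : CondEA P) : P.Nonempty := by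
  haveI := nontrivE hN
  rcases Set.eq_empty_or_nonempty P with h | h
  · exfalso
    have hsp := span_P hN hEA
    rw [h] at hsp
    have : Submodule.span ℝ (∅ : Set (E N)) = ⊤ := hsp
    rw [Submodule.span_empty] at this
    exact bot_ne_top this
  · exact h

lemma Tset_finite {P : Set (E N)} (hP : IsRootSystem P) (p : E N) :
    {t | ∃ v : Fin N → E N, BasisIn P v ∧
      t = sInf (Set.range fun i => |⟪v i, p⟫|)}.Finite := by
  have hsub : {t | ∃ v : Fin N → E N, BasisIn P v ∧
      t = sInf (Set.range fun i => |⟪v i, p⟫|)} ⊆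
      (fun v : Fin N → E N => sInf (Set.range fun i => |⟪v i, p⟫|)) ''
        {v | BasisIn P v} := by
    rintro t ⟨v, hv, rfl⟩; exact ⟨v, hv, rfl⟩
  exact ((basisSet_finite hP).image _).subset hsub

lemma Tset_nonempty (hN : 1 ≤ N) {P : Set (E N)} (hEA : CondEA P) (p : E N) :
    {t | ∃ v : Fin N → E N, BasisIn P v ∧
      t = sInf (Set.range fun i => |⟪v i, p⟫|)}.Nonempty := by
  obtain ⟨v, h1, h2, h3⟩ := basis_of_span (span_P hN hEA)
  exact ⟨_, ⟨v, ⟨h1, h2, h3⟩, rfl⟩⟩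

lemma Sset_finite {P : Set (E N)} (hP : IsRootSystem P) :
    {s | ∃ p₁ ∈ P, s = sSup {t | ∃ v : Fin N → E N, BasisIn P v ∧
      t = sInf (Set.range fun i => |⟪v i, p₁⟫|)}}.Finite := by
  have hsub : {s | ∃ p₁ ∈ P, s = sSup {t | ∃ v : Fin N → E N, BasisIn P v ∧
      t = sInf (Set.range fun i => |⟪v i, p₁⟫|)}} ⊆
      (fun p₁ => sSup {t | ∃ v : Fin N → E N, BasisIn P v ∧
        t = sInf (Set.range fun i => |⟪v i, p₁⟫|)}) '' P := by
    rintro s ⟨p₁, hp₁, rfl⟩; exact ⟨p₁, hp₁, rfl⟩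
  exact (hP.1.image _).subset hsub

lemma sigma1_basis (hN : 1 ≤ N) {P : Set (E N)} (hP : IsRootSystem P) (hEA : CondEA P) :
    ∀ p ∈ P, ∃ v, BasisIn P v ∧ ∀ i, sigma1 P ≤ |⟪v i, p⟫| := by
  classical
  intro p hp
  haveI : Nonempty (Fin N) := ⟨⟨0, hN⟩⟩
  have h1 : sigma1 P ≤ sSup {t | ∃ v : Fin N → E N, BasisIn P v ∧
      t = sInf (Set.range fun i => |⟪v i, p⟫|)} :=
    csInf_le (Sset_finite hP).bddBelow ⟨p, hp, rfl⟩
  have h2 := (Tset_nonempty hN hEA p).csSup_mem (Tset_finite hP p)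
  obtain ⟨v, hv, hveq⟩ := h2
  refine ⟨v, hv, fun i => ?_⟩
  have h3 : sInf (Set.range fun i => |⟪v i, p⟫|) ≤ |⟪v i, p⟫| :=
    csInf_le (Set.finite_range _).bddBelow ⟨i, rfl⟩
  calc sigma1 P ≤ _ := h1
    _ = sInf (Set.range fun i => |⟪v i, p⟫|) := hveq
    _ ≤ |⟪v i, p⟫| := h3

lemma sigma1_mem (hN : 1 ≤ N) {P : Set (E N)} (hP : IsRootSystem P) (hEA : CondEA P) :
    ∃ p₀ ∈ P, sigma1 P = sSup {t | ∃ v : Fin N → E N, BasisIn P v ∧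
      t = sInf (Set.range fun i => |⟪v i, p₀⟫|)} := by
  have hSne : {s | ∃ p₁ ∈ P, s = sSup {t | ∃ v : Fin N → E N, BasisIn P v ∧
      t = sInf (Set.range fun i => |⟪v i, p₁⟫|)}}.Nonempty := by
    obtain ⟨p, hp⟩ := P_nonempty hN hEA
    exact ⟨_, ⟨p, hp, rfl⟩⟩
  have hmem := hSne.csInf_mem (Sset_finite hP)
  exact hmem

lemma sigma1_pos (hN : 1 ≤ N) {P : Set (E N)} (hP : IsRootSystem P) (hEA : CondEA P) :
    0 < sigma1 P := by
  classical
  haveI : Nonempty (Fin N) := ⟨⟨0, hN⟩⟩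
  obtain ⟨p₀, hp₀, heq⟩ := sigma1_mem hN hP hEA
  have hp₀ne : p₀ ≠ 0 := by
    intro h
    have h1 := hP.2.1 p₀ hp₀
    rw [h, norm_zero] at h1
    norm_num at h1
  obtain ⟨v, hvS', hvli, hvsp⟩ := basis_of_span (hEA p₀ hp₀ne)
  have hvP : ∀ i, v i ∈ P := fun i => (hvS' i).1
  have hvnz : ∀ i, ⟪v i, p₀⟫ ≠ 0 := fun i => (hvS' i).2
  have ht₀mem : sInf (Set.range fun i => |⟪v i, p₀⟫|) ∈
      Set.range fun i => |⟪v i, p₀⟫| :=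
    (Set.range_nonempty _).csInf_mem (Set.finite_range _)
  obtain ⟨i₁, hi₁⟩ := ht₀mem
  have ht₀pos : 0 < sInf (Set.range fun i => |⟪v i, p₀⟫|) := by
    rw [← hi₁]; exact abs_pos.2 (hvnz i₁)
  have hle : sInf (Set.range fun i => |⟪v i, p₀⟫|) ≤ sigma1 P := by
    rw [heq]
    exact le_csSup (Tset_finite hP p₀).bddAbove ⟨v, ⟨hvP, hvli, hvsp⟩, rfl⟩
  linarith

lemma sigma1_le_one (hN : 1 ≤ N) {P : Set (E N)} (hP : IsRootSystem P) (hEA : CondEA P) :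
    sigma1 P ≤ 1 := by
  classical
  haveI : Nonempty (Fin N) := ⟨⟨0, hN⟩⟩
  obtain ⟨p₀, hp₀, heq⟩ := sigma1_mem hN hP hEA
  rw [heq]
  apply csSup_le (Tset_nonempty hN hEA p₀)
  rintro t ⟨v, hv, rfl⟩
  have h3 : sInf (Set.range fun i => |⟪v i, p₀⟫|) ≤ |⟪v ⟨0, hN⟩ , p₀⟫| :=
    csInf_le (Set.finite_range _).bddBelow ⟨⟨0, hN⟩, rfl⟩
  have h4 : |⟪v ⟨0, hN⟩, p₀⟫| ≤ 1 := by
    have h5 := abs_real_inner_le_norm (v ⟨0, hN⟩) p₀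
    rw [hP.2.1 _ (hv.1 _), hP.2.1 _ hp₀] at h5
    linarith
  linarith

lemma eq_zero_of_forall_inner {S : Set (E N)} (hsp : Submodule.span ℝ S = ⊤)
    {x : E N} (h : ∀ p ∈ S, ⟪p, x⟫ = 0) : x = 0 := by
  have hle : Submodule.span ℝ S ≤ (ℝ ∙ x)ᗮ := by
    apply Submodule.span_le.2
    intro y hy
    exact Submodule.mem_orthogonal_singleton_iff_inner_left.2 (h y hy)
  have hx : x ∈ (ℝ ∙ x)ᗮ := by
    apply hle
    rw [hsp]; trivial
  have := Submodule.mem_orthogonal_singleton_iff_inner_right.1 hx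
  exact inner_self_eq_zero.1 this

lemma sigma2_bddAbove (hN : 1 ≤ N) {P : Set (E N)} (hP : IsRootSystem P)
    (hEA : CondEA P) :
    BddAbove {t | ∃ x : E N, (∀ p ∈ P, |⟪p, x⟫| ≤ 1) ∧ t = ‖x‖} := by
  classical
  obtain ⟨b, hbP, hbli, hbsp⟩ := basis_of_span (span_P hN hEA)
  set L : E N →ₗ[ℝ] (Fin N → ℝ) :=
    LinearMap.pi (fun i => ((innerSL ℝ (b i)).toLinearMap)) with hL
  have hLapp : ∀ (x : E N) (i : Fin N), L x i = ⟪b i, x⟫ := fun x i => rfl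
  have hker : LinearMap.ker L = ⊥ := by
    rw [Submodule.eq_bot_iff]
    intro x hx
    have hx0 : L x = 0 := hx
    have hx' : ∀ p ∈ Set.range b, ⟪p, x⟫ = 0 := by
      rintro _ ⟨i, rfl⟩
      have := congrFun hx0 i
      simpa [hLapp] using this
    exact eq_zero_of_forall_inner hbsp hx'
  obtain ⟨K, hK0, hKanti⟩ := L.exists_antilipschitzWith hker
  refine ⟨(K : ℝ), ?_⟩
  rintro t ⟨x, hx, rfl⟩
  have h1 : dist x 0 ≤ K * dist (L x) (L 0) := hKanti.le_mul_dist x 0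
  rw [map_zero, dist_zero_right, dist_zero_right] at h1
  have h2 : ‖L x‖ ≤ 1 := by
    rw [pi_norm_le_iff_of_nonneg zero_le_one]
    intro i
    rw [Real.norm_eq_abs, hLapp]
    exact hx (b i) (hbP i)
  calc ‖x‖ ≤ (K : ℝ) * ‖L x‖ := h1
    _ ≤ (K : ℝ) * 1 := by
        apply mul_le_mul_of_nonneg_left h2 K.coe_nonneg
    _ = (K : ℝ) := mul_one _

lemma one_le_sigma2 (hN : 1 ≤ N) {P : Set (E N)} (hP : IsRootSystem P) (hEA : CondEA P) :
    1 ≤ sigma2 P := by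
  obtain ⟨p₀, hp₀⟩ := P_nonempty hN hEA
  have hmem : (1 : ℝ) ∈ {t | ∃ x : E N, (∀ p ∈ P, |⟪p, x⟫| ≤ 1) ∧ t = ‖x‖} := by
    refine ⟨p₀, fun q hq => ?_, (hP.2.1 p₀ hp₀).symm⟩
    have h1 := abs_real_inner_le_norm q p₀
    rw [hP.2.1 q hq, hP.2.1 p₀ hp₀] at h1
    linarith
  exact le_csSup (sigma2_bddAbove hN hP hEA) hmem

lemma exists_max_root (hN : 1 ≤ N) {P : Set (E N)} (hP : IsRootSystem P) (hEA : CondEA P)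
    {x : E N} (hx : x ≠ 0) :
    ∃ p ∈ P, 0 < ⟪p, x⟫ ∧ ‖x‖ ≤ sigma2 P * ⟪p, x⟫ := by
  classical
  obtain ⟨p, hpP, hpmax⟩ := Set.exists_max_image P (fun q => ⟪q, x⟫) hP.1
    (P_nonempty hN hEA)
  have habs : ∀ q ∈ P, |⟪q, x⟫| ≤ ⟪p, x⟫ := by
    intro q hq
    rw [abs_le]
    refine ⟨?_, hpmax q hq⟩
    have h1 := hpmax (-q) (rootSystem_neg hP q hq)
    rw [inner_neg_left] at h1
    linarith
  have hm0 : 0 < ⟪p, x⟫ := by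
    rcases lt_or_ge 0 ⟪p, x⟫ with h | h
    · exact h
    · exfalso
      have hzero : ∀ q ∈ P, ⟪q, x⟫ = 0 := by
        intro q hq
        have h2 := habs q hq
        have h3 : |⟪q, x⟫| = 0 := le_antisymm (by linarith) (abs_nonneg _)
        exact abs_eq_zero.1 h3
      exact hx (eq_zero_of_forall_inner (span_P hN hEA) hzero)
  refine ⟨p, hpP, hm0, ?_⟩
  have hy : ∀ q ∈ P, |⟪q, ⟪p, x⟫⁻¹ • x⟫| ≤ 1 := by
    intro q hq
    rw [real_inner_smul_right, abs_mul, abs_inv, abs_of_pos hm0]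
    rw [inv_mul_le_iff₀ hm0, mul_one]
    exact habs q hq
  have h2 : ‖⟪p, x⟫⁻¹ • x‖ ≤ sigma2 P :=
    le_csSup (sigma2_bddAbove hN hP hEA) ⟨_, hy, rfl⟩
  rw [norm_smul, Real.norm_eq_abs, abs_inv, abs_of_pos hm0] at h2
  rw [inv_mul_le_iff₀ hm0] at h2
  calc ‖x‖ ≤ ⟪p, x⟫ * sigma2 P := h2
    _ = sigma2 P * ⟪p, x⟫ := mul_comm _ _

/-- The key margin lemma: every nonzero `x` admits a basis from `P` all of whose
elements have inner product with `x` at least `σ₁ σ₂⁻¹ ‖x‖`. -/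
lemma margin_lemma (hN : 1 ≤ N) {P : Set (E N)} (hP : IsRootSystem P) (hEA : CondEA P)
    {x : E N} (hx : x ≠ 0) :
    ∃ v, BasisIn P v ∧ ∀ i, sigma1 P * (sigma2 P)⁻¹ * ‖x‖ ≤ ⟪v i, x⟫ := by
  classical
  haveI : Nonempty (Fin N) := ⟨⟨0, hN⟩⟩
  have hσ1pos := sigma1_pos hN hP hEA
  have hσ1le := sigma1_le_one hN hP hEA
  have hσ2pos : 0 < sigma2 P := lt_of_lt_of_le one_pos (one_le_sigma2 hN hP hEA)
  obtain ⟨p₁, hp₁P, hm0, hmx⟩ := exists_max_root hN hP hEA hx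
  set m := ⟪p₁, x⟫ with hm
  obtain ⟨w, hwB, hwprod⟩ := sigma1_basis hN hP hEA p₁ hp₁P
  -- sign-normalize the basis
  set w' : Fin N → E N := fun i => if 0 ≤ ⟪w i, p₁⟫ then w i else -(w i) with hw'
  have hw'P : ∀ i, w' i ∈ P := by
    intro i
    by_cases h : 0 ≤ ⟪w i, p₁⟫
    · simp only [hw', if_pos h]; exact hwB.1 i
    · simp only [hw', if_neg h]; exact rootSystem_neg hP _ (hwB.1 i)
  have hw'prod : ∀ i, sigma1 P ≤ ⟪w' i, p₁⟫ := by
    intro i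
    by_cases h : 0 ≤ ⟪w i, p₁⟫
    · simp only [hw', if_pos h]
      have := hwprod i
      rwa [abs_of_nonneg h] at this
    · simp only [hw', if_neg h, inner_neg_left]
      have := hwprod i
      rw [abs_of_neg (lt_of_not_ge h)] at this
      linarith
  have hw'span : Submodule.span ℝ (Set.range w') = ⊤ := by
    rw [eq_top_iff, ← hwB.2.2]
    apply Submodule.span_le.2
    rintro _ ⟨i, rfl⟩
    by_cases h : 0 ≤ ⟪w i, p₁⟫
    · have he : w i = w' i := by simp only [hw', if_pos h]
      rw [he]
      exact Submodule.subset_span ⟨i, rfl⟩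
    · have he : w i = -(w' i) := by simp only [hw', if_neg h, neg_neg]
      rw [he]
      exact Submodule.neg_mem _ (Submodule.subset_span ⟨i, rfl⟩)
  have hp₁ne : p₁ ≠ 0 := by
    intro h
    have h1 := hP.2.1 p₁ hp₁P
    rw [h, norm_zero] at h1
    norm_num at h1
  -- main induction
  have key : ∀ k : ℕ, k ≤ N → 1 ≤ k → ∃ u : Fin k → E N, (∀ j, u j ∈ P) ∧
      LinearIndependent ℝ u ∧ (∀ j, sigma1 P * m ≤ ⟪u j, x⟫) ∧
      p₁ ∈ Submodule.span ℝ (Set.range u) := by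
    intro k
    induction k with
    | zero => omega
    | succ k ih =>
      intro hkN _
      rcases Nat.eq_zero_or_pos k with rfl | hkpos
      · refine ⟨fun _ => p₁, fun _ => hp₁P, ?_, ?_, ?_⟩
        · haveI : Unique (Fin (0 + 1)) := ⟨⟨0⟩, fun a => Fin.ext (by omega)⟩
          exact linearIndependent_unique_iff.2 hp₁ne
        · intro j
          show sigma1 P * m ≤ m
          nlinarith
        · exact Submodule.subset_span ⟨0, rfl⟩
      · obtain ⟨u, huP, huli, huprod, hup₁⟩ := ih (by omega) (by omega)
        have hVne : Submodule.span ℝ (Set.range u) ≠ ⊤ := by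
          intro hVtop
          have hb : Module.Basis (Fin k) ℝ (E N) := Module.Basis.mk huli (le_of_eq hVtop.symm)
          have h1 := Module.finrank_eq_card_basis hb
          rw [finrank_euclideanSpace_fin, Fintype.card_fin] at h1
          omega
        obtain ⟨j, hj⟩ : ∃ j, w' j ∉ Submodule.span ℝ (Set.range u) := by
          by_contra hall
          push_neg at hall
          apply hVne
          rw [eq_top_iff, ← hw'span]
          exact Submodule.span_le.2 (by rintro _ ⟨i, rfl⟩; exact hall i)
        set aj := ⟪w' j, p₁⟫ with haj
        have hajσ : sigma1 P ≤ aj := hw'prod j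
        have hstep : ∃ q : E N, q ∈ P ∧ q ∉ Submodule.span ℝ (Set.range u) ∧
            sigma1 P * m ≤ ⟪q, x⟫ := by
          by_cases hc : sigma1 P * m ≤ ⟪w' j, x⟫
          · exact ⟨w' j, hw'P j, hj, hc⟩
          · push_neg at hc
            refine ⟨(2 * aj) • p₁ - w' j, ?_, ?_, ?_⟩
            · have h1 : reflect0 p₁ (w' j) ∈ P := by
                rw [← hP.2.2.2 p₁ hp₁P]
                exact ⟨w' j, hw'P j, rfl⟩
              have h2 : reflect0 p₁ (w' j) = w' j - (2 * aj) • p₁ := by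
                simp [reflect0, reflect, haj]
              have h3 : (2 * aj) • p₁ - w' j = -(reflect0 p₁ (w' j)) := by
                rw [h2, neg_sub]
              rw [h3]
              exact rootSystem_neg hP _ h1
            · intro hqV
              apply hj
              have he : w' j = (2 * aj) • p₁ - ((2 * aj) • p₁ - w' j) := by abel
              rw [he]
              exact Submodule.sub_mem _
                (Submodule.smul_mem _ _ hup₁) hqV
            · have he : ⟪(2 * aj) • p₁ - w' j, x⟫ = 2 * aj * m - ⟪w' j, x⟫ := by
                rw [inner_sub_left, real_inner_smul_left, ← hm]
              rw [he]
              nlinarith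
        obtain ⟨q, hqP, hqV, hqprod⟩ := hstep
        refine ⟨Fin.cons q u, ?_, ?_, ?_, ?_⟩
        · intro l
          refine Fin.cases ?_ ?_ l
          · exact hqP
          · exact huP
        · rw [linearIndependent_fin_cons]
          exact ⟨huli, hqV⟩
        · intro l
          refine Fin.cases ?_ ?_ l
          · exact hqprod
          · exact huprod
        · have hle : Submodule.span ℝ (Set.range u) ≤
              Submodule.span ℝ (Set.range (Fin.cons q u : Fin (k+1) → E N)) := by
            apply Submodule.span_mono
            rw [Fin.range_cons]
            exact Set.subset_insert _ _
          exact hle hup₁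
  obtain ⟨u, huP, huli, huprod, -⟩ := key N le_rfl hN
  have huspan : Submodule.span ℝ (Set.range u) = ⊤ :=
    huli.span_eq_top_of_card_eq_finrank
      (by rw [Fintype.card_fin, finrank_euclideanSpace_fin])
  refine ⟨u, ⟨huP, huli, huspan⟩, fun i => ?_⟩
  have hstep1 : sigma1 P * (sigma2 P)⁻¹ * ‖x‖ ≤ sigma1 P * m := by
    rw [mul_assoc]
    apply mul_le_mul_of_nonneg_left _ hσ1pos.le
    rw [inv_mul_le_iff₀ hσ2pos]
    exact hmx
  exact hstep1.trans (huprod i)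

lemma isOpen_cone {v : Fin N → E N} (hind : LinearIndependent ℝ v)
    (hsp : Submodule.span ℝ (Set.range v) = ⊤) (t : ℝ) : IsOpen (Cone t v) := by
  classical
  set β : Module.Basis (Fin N) ℝ (E N) := Module.Basis.mk hind (le_of_eq hsp.symm) with hβ
  have hβv : ∀ i, β i = v i := fun i => by rw [hβ, Module.Basis.coe_mk]
  have hcoe : ∀ w : E N, β.equivFunL w = β.equivFun w := fun w => rfl
  have hEq : Cone t v = ⇑β.equivFunL ⁻¹'
      {a : Fin N → ℝ | (∀ i, 0 < a i) ∧ ∑ i, a i < t} := by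
    ext w
    constructor
    · rintro ⟨a, hapos, hasum, rfl⟩
      have hsum_eq : (∑ i, a i • v i) = β.equivFun.symm a := by
        rw [Module.Basis.equivFun_symm_apply]
        exact Finset.sum_congr rfl fun i _ => by rw [hβv]
      have happ : β.equivFunL (∑ i, a i • v i) = a := by
        rw [hcoe, hsum_eq, LinearEquiv.apply_symm_apply]
      exact ⟨fun i => by rw [happ]; exact hapos i, by rw [happ]; exact hasum⟩
    · intro hw
      refine ⟨β.equivFun w, hw.1, hw.2, ?_⟩
      conv_lhs => rw [← β.sum_equivFun w]
      exact Finset.sum_congr rfl fun i _ => by rw [hβv]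
  rw [hEq]
  apply IsOpen.preimage β.equivFunL.continuous
  have hsplit : {a : Fin N → ℝ | (∀ i, 0 < a i) ∧ ∑ i, a i < t} =
      {a : Fin N → ℝ | ∀ i, 0 < a i} ∩ {a : Fin N → ℝ | ∑ i, a i < t} := rfl
  rw [hsplit]
  apply IsOpen.inter
  · have h1 : {a : Fin N → ℝ | ∀ i, 0 < a i} =
        ⋂ i, (fun a : Fin N → ℝ => a i) ⁻¹' Set.Ioi 0 := by
      ext a; simp [Set.mem_iInter]
    rw [h1]
    exact isOpen_iInter_of_finite fun i =>
      (continuous_apply i).isOpen_preimage _ isOpen_Ioi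
  · exact isOpen_lt (continuous_finset_sum _ fun i _ => continuous_apply i)
      continuous_const

lemma euc_ball_bound (n : ℕ) (R : ℝ) :
    μH[(n : ℝ)] (closedBall (0 : EuclideanSpace ℝ (Fin n)) R) ≠ ⊤ := by
  set f : (Fin n → ℝ) → EuclideanSpace ℝ (Fin n) :=
    ⇑(WithLp.equiv 2 (Fin n → ℝ)).symm with hf
  have hanti := PiLp.antilipschitzWith_ofLp 2 (fun _ : Fin n => ℝ)
  have hlip : LipschitzWith ((Fintype.card (Fin n) : ℝ≥0) ^ (1 / (2:ℝ≥0∞)).toReal) f :=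
    hanti.to_rightInverse (fun _ => rfl)
  have hsub : closedBall (0 : EuclideanSpace ℝ (Fin n)) R ⊆
      f '' (closedBall (0 : Fin n → ℝ) R) := by
    intro x hx
    refine ⟨WithLp.equiv 2 (Fin n → ℝ) x, ?_, (WithLp.equiv 2 _).symm_apply_apply x⟩
    rw [mem_closedBall] at hx ⊢
    have h1 := (PiLp.lipschitzWith_ofLp 2 (fun _ : Fin n => ℝ)).dist_le_mul x 0
    have h2 : WithLp.ofLp (0 : EuclideanSpace ℝ (Fin n)) = (0 : Fin n → ℝ) := rfl
    rw [h2] at h1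
    rw [NNReal.coe_one, one_mul] at h1
    exact h1.trans hx
  have hle := hlip.hausdorffMeasure_image_le (d := (n : ℝ)) (Nat.cast_nonneg n)
    (closedBall (0 : Fin n → ℝ) R)
  have hpi : (μH[(n : ℝ)] : Measure (Fin n → ℝ)) = volume := by
    have h := hausdorffMeasure_pi_real (ι := Fin n)
    rw [Fintype.card_fin] at h
    exact_mod_cast h
  refine ne_top_of_le_ne_top ?_ (measure_mono hsub)
  refine ne_top_of_le_ne_top ?_ hle
  rw [hpi]
  apply ENNReal.mul_ne_top
  · exact ENNReal.rpow_ne_top_of_nonneg (Nat.cast_nonneg n) ENNReal.coe_ne_top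
  · exact (IsCompact.measure_lt_top (isCompact_closedBall _ _)).ne

lemma hyperplane_bound (hN : 1 ≤ N) {w₀ : E N} (hw₀ : w₀ ≠ 0) (R : ℝ) :
    μH[(N : ℝ) - 1] {z : E N | z ∈ (ℝ ∙ w₀)ᗮ ∧ ‖z‖ ≤ R} ≠ ⊤ := by
  have hd0 : (0 : ℝ) ≤ (N : ℝ) - 1 := by
    have : (1 : ℝ) ≤ (N : ℝ) := by exact_mod_cast hN
    linarith
  haveI : Fact (Module.finrank ℝ (E N) = (N - 1) + 1) :=
    ⟨by rw [finrank_euclideanSpace_fin]; omega⟩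
  set W := (ℝ ∙ w₀)ᗮ with hW
  have hfr : Module.finrank ℝ W = N - 1 := Submodule.finrank_orthogonal_span_singleton hw₀
  set ψ := (stdOrthonormalBasis ℝ W).repr with hψ
  set Θ : EuclideanSpace ℝ (Fin (Module.finrank ℝ W)) → E N :=
    fun a => ((ψ.symm a : W) : E N) with hΘ
  have hiso : Isometry Θ := W.subtypeₗᵢ.isometry.comp ψ.symm.isometry
  have hsub : {z : E N | z ∈ W ∧ ‖z‖ ≤ R} ⊆ Θ '' (closedBall 0 R) := by
    rintro z ⟨hzW, hzR⟩
    refine ⟨ψ ⟨z, hzW⟩, ?_, by simp [hΘ]⟩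
    rw [mem_closedBall, dist_zero_right, ψ.norm_map]
    exact hzR
  refine ne_top_of_le_ne_top ?_ (measure_mono hsub)
  rw [hiso.hausdorffMeasure_image (Or.inl hd0)]
  have hcast : (N : ℝ) - 1 = ((Module.finrank ℝ W : ℕ) : ℝ) := by
    rw [hfr]
    have h1 : ((N - 1 : ℕ) : ℝ) = (N : ℝ) - 1 := by
      rw [Nat.cast_sub hN, Nat.cast_one]
    rw [h1]
  rw [hcast]
  exact euc_ball_bound _ R

/-- Quantitative transversality: vectors with mixed-sign coordinates have a
definite fraction of their norm orthogonal to the diagonal direction. -/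
lemma mix_bound {β : Module.Basis (Fin N) ℝ (E N)} {w₀ : E N}
    (hw₀coord : ∀ j, β.equivFun w₀ j = 1) (hw₀ne : w₀ ≠ 0) :
    ∃ δ : ℝ, 0 < δ ∧ ∀ w : E N, (∃ i, β.equivFun w i ≤ 0) →
      (∃ i, 0 ≤ β.equivFun w i) →
      δ * ‖w‖ ≤ ‖((Submodule.orthogonalProjection ((ℝ ∙ w₀)ᗮ) w : (ℝ ∙ w₀)ᗮ) : E N)‖ := by
  classical
  set W := (ℝ ∙ w₀)ᗮ with hW
  set π : E N → E N := fun z => ((Submodule.orthogonalProjection W z : W) : E N) with hπ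
  have hπcont : Continuous π :=
    continuous_subtype_val.comp (Submodule.orthogonalProjection W).continuous
  have hcont : ∀ i, Continuous fun w : E N => β.equivFun w i := fun i =>
    (continuous_apply i).comp β.equivFunL.continuous
  set MIX : Set (E N) :=
    {w | (∃ i, β.equivFun w i ≤ 0) ∧ (∃ i, 0 ≤ β.equivFun w i)} with hMIX
  have hMIXclosed : IsClosed MIX := by
    have h1 : MIX = (⋃ i, {w : E N | β.equivFun w i ≤ 0}) ∩
        (⋃ i, {w : E N | 0 ≤ β.equivFun w i}) := by
      ext w
      simp only [hMIX, Set.mem_setOf_eq, Set.mem_inter_iff, Set.mem_iUnion]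
    rw [h1]
    exact (isClosed_iUnion_of_finite fun i =>
        isClosed_le (hcont i) continuous_const).inter
      (isClosed_iUnion_of_finite fun i =>
        isClosed_le continuous_const (hcont i))
  set SM := sphere (0 : E N) 1 ∩ MIX with hSM
  have hscale : ∀ w : E N, w ≠ 0 → w ∈ MIX → (‖w‖⁻¹ • w) ∈ SM := by
    intro w hwne hmix
    have hn : (0:ℝ) < ‖w‖ := norm_pos_iff.2 hwne
    refine ⟨?_, ?_, ?_⟩
    · rw [mem_sphere, dist_zero_right, norm_smul, Real.norm_eq_abs, abs_inv,
        abs_of_pos hn, inv_mul_cancel₀ hn.ne']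
    · obtain ⟨i1, hi1⟩ := hmix.1
      refine ⟨i1, ?_⟩
      rw [_root_.map_smul]
      have : (‖w‖⁻¹ • β.equivFun w) i1 = ‖w‖⁻¹ * β.equivFun w i1 := rfl
      rw [this]
      exact mul_nonpos_of_nonneg_of_nonpos (by positivity) hi1
    · obtain ⟨i2, hi2⟩ := hmix.2
      refine ⟨i2, ?_⟩
      rw [_root_.map_smul]
      have : (‖w‖⁻¹ • β.equivFun w) i2 = ‖w‖⁻¹ * β.equivFun w i2 := rfl
      rw [this]
      positivity
  by_cases hSMne : SM.Nonempty
  · obtain ⟨wm, hwmSM, hwmmin⟩ :=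
      ((isCompact_sphere (0:E N) 1).inter_right hMIXclosed).exists_isMinOn hSMne
        (continuous_norm.comp hπcont).continuousOn
    refine ⟨‖π wm‖, ?_, ?_⟩
    · by_contra h0
      push_neg at h0
      have h1 : π wm = 0 := norm_eq_zero.1 (le_antisymm h0 (norm_nonneg _))
      have h2 : Submodule.orthogonalProjection W wm = 0 := Submodule.coe_eq_zero.1 h1
      have h3 : wm ∈ Wᗮ := Submodule.orthogonalProjection_eq_zero_iff.1 h2
      have h4 : Wᗮ = ℝ ∙ w₀ := Submodule.orthogonal_orthogonal _
      rw [h4] at h3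
      obtain ⟨c, hc⟩ := Submodule.mem_span_singleton.1 h3
      have hcoords : ∀ j, β.equivFun wm j = c := by
        intro j
        rw [← hc, _root_.map_smul]
        have : (c • β.equivFun w₀) j = c * β.equivFun w₀ j := rfl
        rw [this, hw₀coord j, mul_one]
      obtain ⟨i1, hi1⟩ := hwmSM.2.1
      obtain ⟨i2, hi2⟩ := hwmSM.2.2
      rw [hcoords i1] at hi1
      rw [hcoords i2] at hi2
      have hc0 : c = 0 := le_antisymm hi1 hi2
      rw [hc0, zero_smul] at hc
      have h5 : ‖wm‖ = 1 := by
        have := hwmSM.1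
        rwa [mem_sphere, dist_zero_right] at this
      rw [← hc, norm_zero] at h5
      norm_num at h5
    · intro w hmix1 hmix2
      rcases eq_or_ne w 0 with rfl | hwne
      · simp [hπ]
      · have hmixw : w ∈ MIX := by rw [hMIX]; exact ⟨hmix1, hmix2⟩
        have hwnrm := hscale w hwne hmixw
        have h1 : ‖π wm‖ ≤ ‖π (‖w‖⁻¹ • w)‖ := isMinOn_iff.1 hwmmin _ hwnrm
        have hn : (0:ℝ) < ‖w‖ := norm_pos_iff.2 hwne
        have h2 : ‖π (‖w‖⁻¹ • w)‖ = ‖w‖⁻¹ * ‖π w‖ := by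
          have h3 : π (‖w‖⁻¹ • w) = ‖w‖⁻¹ • π w := by
            rw [hπ]
            simp only [_root_.map_smul, SetLike.val_smul]
          rw [h3, norm_smul, Real.norm_eq_abs, abs_inv, abs_of_pos hn]
        rw [h2] at h1
        calc ‖π wm‖ * ‖w‖ ≤ (‖w‖⁻¹ * ‖π w‖) * ‖w‖ :=
              mul_le_mul_of_nonneg_right h1 hn.le
          _ = ‖π w‖ := by field_simp
  · refine ⟨1, one_pos, fun w h1 h2 => ?_⟩
    rcases eq_or_ne w 0 with rfl | hwne
    · simp [hπ]
    · have hmixw : w ∈ MIX := by rw [hMIX]; exact ⟨h1, h2⟩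
      exact absurd (hscale w hwne hmixw) fun hc => hSMne ⟨_, hc⟩

/-- The geometric covering bound: any subset of a ball satisfying the two-sided cone
separation condition w.r.t. a fixed basis has finite `H^{N-1}` measure, bounded
independently of the set. -/
lemma geom_bound (hN : 1 ≤ N) {v : Fin N → E N} (hind : LinearIndependent ℝ v)
    (hsp : Submodule.span ℝ (Set.range v) = ⊤) {r R : ℝ} (hr : 0 < r) (hR : 0 < R) :
    ∃ B : ℝ≥0∞, B ≠ ⊤ ∧ ∀ F : Set (E N), F ⊆ closedBall 0 R →
      (∀ x ∈ F, ∀ y ∈ F, y - x ∉ Cone (2 * r) v) → μH[(N : ℝ) - 1] F ≤ B := by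
  classical
  haveI : Nonempty (Fin N) := ⟨⟨0, hN⟩⟩
  have hd0 : (0:ℝ) ≤ (N:ℝ) - 1 := by
    have : (1 : ℝ) ≤ (N : ℝ) := by exact_mod_cast hN
    linarith
  set β : Module.Basis (Fin N) ℝ (E N) := Module.Basis.mk hind (le_of_eq hsp.symm) with hβ
  have hβv : ∀ i, β i = v i := fun i => by rw [hβ, Module.Basis.coe_mk]
  set K₀ : ℝ := ‖(β.equivFunL.toContinuousLinearMap : E N →L[ℝ] (Fin N → ℝ))‖ with hK₀
  have hK₀0 : 0 ≤ K₀ := norm_nonneg _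
  have hcoord : ∀ (w : E N) (i : Fin N), |β.equivFun w i| ≤ K₀ * ‖w‖ := by
    intro w i
    have h1 : ‖(β.equivFunL w) i‖ ≤ ‖β.equivFunL w‖ := norm_le_pi_norm _ i
    have h2 : ‖β.equivFunL w‖ ≤ K₀ * ‖w‖ :=
      β.equivFunL.toContinuousLinearMap.le_opNorm w
    rw [Real.norm_eq_abs] at h1
    exact le_trans h1 h2
  set M : ℝ := N * K₀ + 1 with hM
  have hM0 : 0 < M := by positivity
  set h : ℝ := 2 * r / M with hh
  have hh0 : 0 < h := by positivity
  set w₀ : E N := ∑ i, v i with hw₀def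
  have hw₀coord : ∀ j, β.equivFun w₀ j = 1 := by
    intro j
    have h1 : w₀ = ∑ i, (1:ℝ) • β i := by
      rw [hw₀def]
      exact Finset.sum_congr rfl fun i _ => by rw [hβv, one_smul]
    have h2 : β.equivFun w₀ = fun _ => (1:ℝ) := by
      rw [h1, Module.Basis.equivFun_apply, Module.Basis.repr_sum_self]
    rw [h2]
  have hw₀ne : w₀ ≠ 0 := by
    intro h0
    have h1 := hw₀coord ⟨0, hN⟩
    rw [h0, map_zero] at h1
    simp at h1
  set W := (ℝ ∙ w₀)ᗮ with hW
  set π : E N → E N := fun z => ((Submodule.orthogonalProjection W z : W) : E N) with hπ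
  have hπnorm : ∀ z, ‖π z‖ ≤ ‖z‖ := by
    intro z
    have h1 : ‖Submodule.orthogonalProjection W z‖ ≤ ‖Submodule.orthogonalProjection W‖ * ‖z‖ :=
      (Submodule.orthogonalProjection W).le_opNorm z
    have h2 := Submodule.orthogonalProjection_norm_le (K := W)
    have h3 : ‖π z‖ = ‖Submodule.orthogonalProjection W z‖ := rfl
    rw [h3]
    nlinarith [norm_nonneg z]
  obtain ⟨δ, hδ0, hδle⟩ := mix_bound (β := β) hw₀coord hw₀ne
  obtain ⟨t, ht⟩ : ∃ t : Finset (E N),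
      closedBall (0 : E N) R ⊆ ⋃ c ∈ t, ball c (h / 2) := by
    obtain ⟨t, ht⟩ := (isCompact_closedBall (0 : E N) R).elim_finite_subcover
      (fun c : E N => ball c (h / 2)) (fun _ => isOpen_ball)
      (fun z _ => Set.mem_iUnion.2 ⟨z, mem_ball_self (by positivity)⟩)
    exact ⟨t, ht⟩
  set KW := μH[(N : ℝ) - 1] {z : E N | z ∈ W ∧ ‖z‖ ≤ R} with hKWdef
  have hKWne : KW ≠ ⊤ := hyperplane_bound hN hw₀ne R
  set Kd : ℝ≥0∞ := ((δ⁻¹).toNNReal : ℝ≥0∞) ^ ((N:ℝ) - 1) with hKd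
  have hKdne : Kd ≠ ⊤ := ENNReal.rpow_ne_top_of_nonneg hd0 ENNReal.coe_ne_top
  refine ⟨t.card * (Kd * KW), ?_, ?_⟩
  · exact ENNReal.mul_ne_top (ENNReal.natCast_ne_top _)
      (ENNReal.mul_ne_top hKdne hKWne)
  intro F hFR hFsep
  have hpiece : ∀ c : E N, μH[(N:ℝ)-1] (F ∩ ball c (h/2)) ≤ Kd * KW := by
    intro c
    set Fc := F ∩ ball c (h/2) with hFc
    have hanti : ∀ x ∈ Fc, ∀ y ∈ Fc, δ * ‖y - x‖ ≤ ‖π y - π x‖ := by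
      intro x hx y hy
      have hdist : ‖y - x‖ < h := by
        have h1 : dist y c < h/2 := mem_ball.1 hy.2
        have h2 : dist x c < h/2 := mem_ball.1 hx.2
        have h3 := dist_triangle y c x
        rw [dist_comm c x] at h3
        rw [← dist_eq_norm]
        linarith
      have hwsum : ∀ w : E N, ‖w‖ < h → (∀ i, 0 < β.equivFun w i) →
          w ∈ Cone (2*r) v := by
        intro w hwh hwpos
        refine ⟨β.equivFun w, hwpos, ?_, ?_⟩
        · have hs1 : ∑ i, β.equivFun w i ≤ ∑ _i : Fin N, K₀ * ‖w‖ :=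
            Finset.sum_le_sum fun i _ => le_trans (le_abs_self _) (hcoord w i)
          have hs2 : ∑ _i : Fin N, K₀ * ‖w‖ = N * K₀ * ‖w‖ := by
            rw [Finset.sum_const, Finset.card_univ, Fintype.card_fin, nsmul_eq_mul]
            ring
          have hs3 : N * K₀ * ‖w‖ ≤ N * K₀ * h :=
            mul_le_mul_of_nonneg_left hwh.le (by positivity)
          have hs4 : N * K₀ * h < M * h := by
            apply mul_lt_mul_of_pos_right ?_ hh0
            rw [hM]
            linarith
          have hs5 : M * h = 2 * r := by
            rw [hh]
            field_simp
          linarith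
        · conv_lhs => rw [← β.sum_equivFun w]
          exact Finset.sum_congr rfl fun i _ => by rw [hβv]
      have hmix1 : ∃ i, β.equivFun (y - x) i ≤ 0 := by
        by_contra hall
        push_neg at hall
        exact hFsep x hx.1 y hy.1 (hwsum _ hdist fun i => hall i)
      have hmix2 : ∃ i, 0 ≤ β.equivFun (y - x) i := by
        by_contra hall
        push_neg at hall
        have hall2 : ∀ i, 0 < β.equivFun (x - y) i := by
          intro i
          have h1 := hall i
          have h2 : β.equivFun (x - y) i = -(β.equivFun (y - x) i) := by
            rw [← neg_sub y x, map_neg]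
            rfl
          rw [h2]
          linarith
        refine hFsep y hy.1 x hx.1 (hwsum _ ?_ hall2)
        rwa [norm_sub_rev]
      have h1 := hδle (y - x) hmix1 hmix2
      have h2 : π y - π x = π (y - x) := by
        rw [hπ]
        simp only [map_sub]
        rfl
      rw [h2]
      exact h1
    have hinj : Set.InjOn π Fc := by
      intro x hx y hy hxy
      have h1 := hanti x hx y hy
      rw [hxy, sub_self, norm_zero] at h1
      have h2 : ‖y - x‖ ≤ 0 := by nlinarith [norm_nonneg (y - x)]
      have h3 : ‖y - x‖ = 0 := le_antisymm h2 (norm_nonneg _)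
      exact (sub_eq_zero.1 (norm_eq_zero.1 h3)).symm
    set g := Function.invFunOn π Fc with hg
    have hlinv : Set.LeftInvOn g π Fc := hinj.leftInvOn_invFunOn
    have himg : g '' (π '' Fc) = Fc := hlinv.image_image
    have hglip : LipschitzOnWith (δ⁻¹).toNNReal g (π '' Fc) := by
      rw [lipschitzOnWith_iff_dist_le_mul]
      rintro _ ⟨x1, hx1, rfl⟩ _ ⟨x2, hx2, rfl⟩
      rw [hlinv hx1, hlinv hx2]
      have h1 := hanti x2 hx2 x1 hx1
      rw [Real.coe_toNNReal _ (by positivity), dist_eq_norm, dist_eq_norm]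
      rw [inv_mul_eq_div, le_div_iff₀ hδ0, mul_comm]
      exact h1
    calc μH[(N:ℝ)-1] Fc = μH[(N:ℝ)-1] (g '' (π '' Fc)) := by rw [himg]
      _ ≤ ((δ⁻¹).toNNReal : ℝ≥0∞) ^ ((N:ℝ)-1) * μH[(N:ℝ)-1] (π '' Fc) :=
          hglip.hausdorffMeasure_image_le hd0
      _ ≤ Kd * KW := by
          rw [hKd, hKWdef]
          apply mul_le_mul' le_rfl
          apply measure_mono
          rintro _ ⟨z, hz, rfl⟩
          refine ⟨(Submodule.orthogonalProjection W z).2, ?_⟩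
          have h1 := hπnorm z
          have h2 : ‖z‖ ≤ R := by
            have h3 := hFR hz.1
            rwa [mem_closedBall, dist_zero_right] at h3
          exact h1.trans h2
  calc μH[(N:ℝ)-1] F ≤ μH[(N:ℝ)-1] (⋃ c ∈ t, F ∩ ball c (h/2)) := by
        apply measure_mono
        intro x hx
        obtain ⟨c, hc, hmem⟩ := Set.mem_iUnion₂.1 (ht (hFR hx))
        exact Set.mem_iUnion₂.2 ⟨c, hc, hx, hmem⟩
    _ ≤ ∑ c ∈ t, μH[(N:ℝ)-1] (F ∩ ball c (h/2)) := measure_biUnion_finset_le _ _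
    _ ≤ ∑ _c ∈ t, Kd * KW := Finset.sum_le_sum fun c _ => hpiece c
    _ = t.card * (Kd * KW) := by rw [Finset.sum_const, nsmul_eq_mul]

end Aux

/-- uniform perimeter bound. -/
theorem perimeter_bound (N : ℕ) (hN : 1 ≤ N) (P : Set (E N))
    (hP : IsRootSystem P) (hEA : CondEA P) (ρ r R : ℝ) (hρ : 0 ≤ ρ)
    (hr : 0 < r) (hR : 0 < R) :
    ∃ C > 0, ∀ Ω : Set (E N), IsOpen Ω → ReflProp P ρ Ω →
      ball (0 : E N) ((sigma1 P)⁻¹ * sigma2 P * (ρ + 2 * r)) ⊆ Ω →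
      Ω ⊆ ball (0 : E N) R →
      μH[(N : ℝ) - 1] (frontier Ω) ≤ ENNReal.ofReal C := by
  classical
  haveI : Nonempty (Fin N) := ⟨⟨0, hN⟩⟩
  have hσ1pos := sigma1_pos hN hP hEA
  have hσ2pos : 0 < sigma2 P := lt_of_lt_of_le one_pos (one_le_sigma2 hN hP hEA)
  have hBfin := basisSet_finite hP
  set 𝔅 : Finset (Fin N → E N) := hBfin.toFinset with h𝔅
  have hgb : ∀ v ∈ 𝔅, ∃ B : ℝ≥0∞, B ≠ ⊤ ∧ ∀ F : Set (E N), F ⊆ closedBall 0 R →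
      (∀ x ∈ F, ∀ y ∈ F, y - x ∉ Cone (2 * r) v) → μH[(N : ℝ) - 1] F ≤ B := by
    intro v hv
    rw [h𝔅, Set.Finite.mem_toFinset] at hv
    exact geom_bound hN hv.2.1 hv.2.2 hr hR
  choose! B hBne hBle using hgb
  refine ⟨(∑ v ∈ 𝔅, B v).toReal + 1, by positivity, ?_⟩
  intro Ω hΩ hRP hball hΩR
  set F : (Fin N → E N) → Set (E N) :=
    fun v => frontier Ω ∩ {x | ∀ i, ρ + 2 * r ≤ ⟪v i, x⟫} with hF
  -- the frontier is covered by the pieces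
  have hfrsub : frontier Ω ⊆ ⋃ v ∈ 𝔅, F v := by
    intro x hx
    have hxnot : x ∉ Ω := by
      rw [hΩ.frontier_eq] at hx
      exact hx.2
    have hxball : x ∉ ball (0 : E N) ((sigma1 P)⁻¹ * sigma2 P * (ρ + 2 * r)) :=
      fun hmem => hxnot (hball hmem)
    have hxnorm : (sigma1 P)⁻¹ * sigma2 P * (ρ + 2 * r) ≤ ‖x‖ := by
      rw [mem_ball, dist_zero_right] at hxball
      linarith [not_lt.1 hxball]
    have hρ'pos : 0 < (sigma1 P)⁻¹ * sigma2 P * (ρ + 2 * r) := by positivity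
    have hxne : x ≠ 0 := by
      intro h0
      rw [h0, norm_zero] at hxnorm
      linarith
    obtain ⟨v, hvB, hvprod⟩ := margin_lemma hN hP hEA hxne
    refine Set.mem_iUnion₂.2 ⟨v, ?_, hx, fun i => ?_⟩
    · rw [h𝔅, Set.Finite.mem_toFinset]
      exact hvB
    · have h1 : sigma1 P * (sigma2 P)⁻¹ * ((sigma1 P)⁻¹ * sigma2 P * (ρ + 2 * r)) ≤
          sigma1 P * (sigma2 P)⁻¹ * ‖x‖ :=
        mul_le_mul_of_nonneg_left hxnorm (by positivity)
      have h2 : sigma1 P * (sigma2 P)⁻¹ * ((sigma1 P)⁻¹ * sigma2 P * (ρ + 2 * r)) =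
          ρ + 2 * r := by
        field_simp
      calc ρ + 2 * r = _ := h2.symm
        _ ≤ sigma1 P * (sigma2 P)⁻¹ * ‖x‖ := h1
        _ ≤ ⟪v i, x⟫ := hvprod i
  have hmeas : μH[(N : ℝ) - 1] (frontier Ω) ≤ ∑ v ∈ 𝔅, B v := by
    calc μH[(N : ℝ) - 1] (frontier Ω) ≤ μH[(N : ℝ) - 1] (⋃ v ∈ 𝔅, F v) :=
          measure_mono hfrsub
      _ ≤ ∑ v ∈ 𝔅, μH[(N : ℝ) - 1] (F v) := measure_biUnion_finset_le _ _
      _ ≤ ∑ v ∈ 𝔅, B v := by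
          apply Finset.sum_le_sum
          intro v hv
          have hvB : BasisIn P v := by
            rw [h𝔅, Set.Finite.mem_toFinset] at hv
            exact hv
          apply hBle v hv
          · -- F v ⊆ closedBall 0 R
            intro x hx
            have h1 : closure Ω ⊆ closedBall 0 R :=
              closure_minimal (hΩR.trans ball_subset_closedBall) Metric.isClosed_closedBall
            exact h1 (frontier_subset_closure hx.1)
          · -- separation
            intro x hx y hy hcone
            have hxnot : x ∉ Ω := by
              have := hx.1
              rw [hΩ.frontier_eq] at this
              exact this.2
            set U : Set (E N) := (fun z => z - x) ⁻¹' (Cone (2 * r) v) with hU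
            have hUopen : IsOpen U :=
              (isOpen_cone hvB.2.1 hvB.2.2 (2 * r)).preimage
                (continuous_id.sub continuous_const)
            have hyU : y ∈ U := hcone
            have hyclos : y ∈ closure Ω := frontier_subset_closure hy.1
            obtain ⟨z, hzU, hzΩ⟩ :=
              (_root_.mem_closure_iff.1 hyclos) U hUopen hyU
            obtain ⟨a, hapos, hasum, hzeq⟩ := hzU
            have hnot : x + ∑ j, a j • v j ∉ Ω := by
              apply stair_up hRP hvB.1 (fun i => hP.2.1 _ (hvB.1 i)) hxnot
                (fun i => (hapos i).le)
              intro i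
              have h1 := hx.2 i
              have h2 : ⟪x, v i⟫ = ⟪v i, x⟫ := real_inner_comm _ _
              rw [h2]
              linarith
            apply hnot
            have hz2 : z - x = ∑ j, a j • v j := hzeq
            have hxz : x + ∑ j, a j • v j = z := by
              rw [← hz2]
              abel
            rw [hxz]
            exact hzΩ
  have hne : (∑ v ∈ 𝔅, B v) ≠ ⊤ := by
    rw [ENNReal.sum_ne_top]
    exact fun v hv => hBne v hv
  calc μH[(N : ℝ) - 1] (frontier Ω) ≤ ∑ v ∈ 𝔅, B v := hmeas
    _ ≤ ENNReal.ofReal ((∑ v ∈ 𝔅, B v).toReal + 1) := by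
        rw [ENNReal.ofReal_add ENNReal.toReal_nonneg zero_le_one,
          ENNReal.ofReal_toReal hne]
        exact le_add_of_nonneg_right (by norm_num)
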